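/- arXiv:1405.5173 — 5 statements merged into one kernel-verified Lean document; each statement's English description precedes it below -/
import Mathlib

section
/- Let φ : ℂ → ℂ be continuous on the closed unit disk 𝔻̄, map 𝔻̄ into 𝔻̄ and 𝔻 into 𝔻, and be analytic on 𝔻. Let a ∈ 𝔻 and suppose the iterates φ_n converge to the constant a uniformly on every compact subset of 𝔻. Then φ_n → a uniformly on 𝔻 if and only if there exists N ≥ 1 such that φ_N(𝔻̄) ⊆ 𝔻. -/
open Metric Complex

theorem stmt_0 (φ : ℂ → ℂ) (a : ℂ)
    (hcont : ContinuousOn φ (closedBall (0:ℂ) 1))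
    (hmapsc : Set.MapsTo φ (closedBall (0:ℂ) 1) (closedBall (0:ℂ) 1))
    (hmaps : Set.MapsTo φ (ball (0:ℂ) 1) (ball (0:ℂ) 1))
    (hanal : DifferentiableOn ℂ φ (ball (0:ℂ) 1))
    (ha : a ∈ ball (0:ℂ) 1)
    (hloc : ∀ K : Set ℂ, K ⊆ ball (0:ℂ) 1 → IsCompact K →
      ∀ ε > 0, ∃ N : ℕ, ∀ n ≥ N, ∀ z ∈ K, ‖φ^[n] z - a‖ < ε) :
    (∀ ε > 0, ∃ N : ℕ, ∀ n ≥ N, ∀ z ∈ ball (0:ℂ) 1, ‖φ^[n] z - a‖ < ε) ↔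
      (∃ N : ℕ, 1 ≤ N ∧ Set.MapsTo φ^[N] (closedBall (0:ℂ) 1) (ball (0:ℂ) 1)) := by
  -- continuity and mapsTo of iterates on the closed ball
  have hC : ∀ n : ℕ, ContinuousOn φ^[n] (closedBall (0:ℂ) 1) ∧
      Set.MapsTo φ^[n] (closedBall (0:ℂ) 1) (closedBall (0:ℂ) 1) := by
    intro n
    induction n with
    | zero => exact ⟨continuousOn_id, Set.mapsTo_id _⟩
    | succ n ih =>
      rw [Function.iterate_succ']
      exact ⟨hcont.comp ih.1 ih.2, hmapsc.comp ih.2⟩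
  constructor
  · intro h
    set ε : ℝ := (1 - ‖a‖) / 2 with hε
    have haa : ‖a‖ < 1 := by simpa using ha
    have hεpos : 0 < ε := by simp [hε]; linarith
    obtain ⟨N, hN⟩ := h ε hεpos
    refine ⟨max N 1, le_max_right _ _, ?_⟩
    intro z hz
    have hle : ‖φ^[max N 1] z - a‖ ≤ ε := by
      have hcl : z ∈ closure (ball (0:ℂ) 1) := by
        rwa [closure_ball (0:ℂ) one_ne_zero]
      have hcw : ContinuousWithinAt (fun w => ‖φ^[max N 1] w - a‖)
          (ball (0:ℂ) 1) z := by
        have h1 : ContinuousOn (fun w => ‖φ^[max N 1] w - a‖) (closedBall (0:ℂ) 1) :=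
          ((hC (max N 1)).1.sub continuousOn_const).norm
        simpa using (h1 z hz).mono (ball_subset_closedBall)
      have hne : (nhdsWithin z (ball (0:ℂ) 1)).NeBot :=
        mem_closure_iff_nhdsWithin_neBot.mp hcl
      refine le_of_tendsto hcw ?_
      filter_upwards [self_mem_nhdsWithin] with w hw
      exact (hN (max N 1) (le_max_left _ _) w hw).le
    have : ‖φ^[max N 1] z‖ < 1 := by
      calc ‖φ^[max N 1] z‖ ≤ ‖φ^[max N 1] z - a‖ + ‖a‖ := by
            simpa using norm_add_le (φ^[max N 1] z - a) a
        _ ≤ ε + ‖a‖ := by linarith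
        _ < 1 := by simp [hε]; linarith
    simpa using this
  · rintro ⟨N, hN1, hNmaps⟩
    intro ε hεpos
    set K : Set ℂ := φ^[N] '' (closedBall (0:ℂ) 1) with hK
    have hKsub : K ⊆ ball (0:ℂ) 1 := Set.image_subset_iff.mpr hNmaps
    have hKcomp : IsCompact K := (isCompact_closedBall _ _).image_of_continuousOn (hC N).1
    obtain ⟨M, hM⟩ := hloc K hKsub hKcomp ε hεpos
    refine ⟨M + N, ?_⟩
    intro n hn z hz
    have hzK : φ^[N] z ∈ K := Set.mem_image_of_mem _ (ball_subset_closedBall hz)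
    have heq : φ^[n] z = φ^[n - N] (φ^[N] z) := by
      rw [← Function.iterate_add_apply]
      congr 1
      omega
    rw [heq]
    exact hM (n - N) (by omega) _ hzK
end

section
/- For every real t > 0, the iterates (φ_t)_n = φ_t^[n] converge to the constant function 1 uniformly on 𝔻, i.e., for every ε > 0 there is N such that for all n ≥ N and all z ∈ 𝔻, |φ_t^[n](z) − 1| < ε. -/
open Metric Complex

/-- The parabolic non-automorphism semigroup maps
`φ_t(z) = (t + (2−t)z)/((2+t) − t z)`. -/
noncomputable def phiT (t : ℝ) (z : ℂ) : ℂ :=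
  ((t : ℂ) + (2 - (t : ℂ)) * z) / ((2 + (t : ℂ)) - (t : ℂ) * z)

lemma denom_ne (u : ℝ) (hu : 0 ≤ u) {z : ℂ} (hz : z ∈ ball (0:ℂ) 1) :
    (2 + (u : ℂ)) - (u : ℂ) * z ≠ 0 := by
  intro h
  have hz1 : z.re < 1 := lt_of_le_of_lt (Complex.re_le_norm z)
    (by simpa using mem_ball_zero_iff.mp hz)
  have hre : ((2 + (u:ℂ)) - (u:ℂ) * z).re = 2 + u * (1 - z.re) := by
    simp [Complex.sub_re, Complex.add_re, Complex.mul_re, Complex.ofReal_re, Complex.ofReal_im]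
    ring
  rw [h] at hre
  simp at hre
  nlinarith

lemma phiT_comp (s t : ℝ) (hs : 0 ≤ s) (ht : 0 ≤ t) {z : ℂ} (hz : z ∈ ball (0:ℂ) 1) :
    phiT t (phiT s z) = phiT (s + t) z := by
  have h1 := denom_ne s hs hz
  have h2 := denom_ne (s + t) (by linarith) hz
  have h3 : ((2:ℂ) + (t:ℂ)) * ((2 + (s:ℂ)) - (s:ℂ)*z) - (t:ℂ) * ((s:ℂ) + (2-(s:ℂ))*z) ≠ 0 := by
    have he : ((2:ℂ) + (t:ℂ)) * ((2 + (s:ℂ)) - (s:ℂ)*z) - (t:ℂ) * ((s:ℂ) + (2-(s:ℂ))*z)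
        = 2 * ((2 + ((s+t : ℝ) : ℂ)) - ((s+t : ℝ) : ℂ) * z) := by push_cast; ring
    rw [he]
    exact mul_ne_zero two_ne_zero h2
  push_cast at h2
  unfold phiT
  set A := (s:ℂ) + (2-(s:ℂ))*z with hA
  set B := (2+(s:ℂ)) - (s:ℂ)*z with hB
  have h4 : (2 + (t:ℂ)) - (t:ℂ) * (A / B) = (((2:ℂ)+(t:ℂ))*B - (t:ℂ)*A)/B := by
    field_simp
  have h5 : ((t:ℂ) + (2-(t:ℂ)) * (A/B)) = ((t:ℂ)*B + (2-(t:ℂ))*A)/B := by field_simp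
  rw [h4, h5, div_div_div_cancel_right₀, div_eq_div_iff h3 (by push_cast; exact h2)]
  · push_cast
    ring
  · exact h1

lemma phiT_iter (t : ℝ) (ht : 0 ≤ t) (n : ℕ) {z : ℂ} (hz : z ∈ ball (0:ℂ) 1) :
    (phiT t)^[n] z = phiT (n * t) z := by
  induction n with
  | zero =>
    simp only [Function.iterate_zero, id_eq, Nat.cast_zero, zero_mul]
    unfold phiT
    norm_num
  | succ n ih =>
    rw [Function.iterate_succ_apply', ih, phiT_comp ((n:ℝ) * t) t (by positivity) ht hz]
    congr 1
    push_cast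
    ring

lemma abs_le_abs_two_add {w : ℂ} (hw : 0 ≤ w.re) : ‖w‖ ≤ ‖2 + w‖ := by
  rw [Complex.norm_def, Complex.norm_def]
  apply Real.sqrt_le_sqrt
  simp only [Complex.normSq_apply, Complex.add_re, Complex.add_im]
  norm_num
  nlinarith

lemma phiT_bound (s : ℝ) (hs : 0 < s) {z : ℂ} (hz : z ∈ ball (0:ℂ) 1) :
    ‖phiT s z - 1‖ ≤ 2 / s := by
  have h1 := denom_ne s hs.le hz
  have hz1 : z.re < 1 := lt_of_le_of_lt (Complex.re_le_norm z)
    (by simpa using mem_ball_zero_iff.mp hz)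
  have hzne : z ≠ 1 := by
    intro h; rw [h] at hz1; norm_num at hz1
  have hA : 0 < ‖z - 1‖ := by
    rw [norm_pos_iff]
    exact sub_ne_zero.mpr hzne
  have heq : phiT s z - 1 = 2 * (z - 1) / ((2 + (s:ℂ)) - (s:ℂ) * z) := by
    unfold phiT
    field_simp
    ring
  rw [heq, norm_div, norm_mul]
  have hD : s * ‖z - 1‖ ≤ ‖(2 + (s:ℂ)) - (s:ℂ) * z‖ := by
    have he : (2 + (s:ℂ)) - (s:ℂ) * z = 2 + (s:ℂ) * (1 - z) := by ring
    rw [he]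
    have hw : 0 ≤ ((s:ℂ) * (1 - z)).re := by
      simp [Complex.mul_re, Complex.sub_re, Complex.sub_im]
      nlinarith
    have := abs_le_abs_two_add hw
    calc s * ‖z - 1‖ = ‖(s:ℂ) * (1 - z)‖ := by
          rw [norm_mul, Complex.norm_real, Real.norm_eq_abs, abs_of_pos hs, ← norm_neg (1 - z)]
          ring_nf
      _ ≤ _ := this
  have hDpos : 0 < ‖(2 + (s:ℂ)) - (s:ℂ) * z‖ := by
    rw [norm_pos_iff]; exact h1
  rw [div_le_div_iff₀ hDpos hs]
  have habs2 : ‖(2:ℂ)‖ = 2 := by norm_num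
  rw [habs2]
  nlinarith

theorem stmt_7 (t : ℝ) (ht : 0 < t) :
    ∀ ε > 0, ∃ N : ℕ, ∀ n ≥ N, ∀ z ∈ ball (0:ℂ) 1,
      ‖(phiT t)^[n] z - 1‖ < ε := by
  intro ε hε
  obtain ⟨N, hN⟩ := exists_nat_gt (2 / (ε * t))
  refine ⟨N + 1, fun n hn z hz => ?_⟩
  have hn1 : 1 ≤ n := le_trans (Nat.le_add_left 1 N) hn
  have hnpos : 0 < (n : ℝ) := by exact_mod_cast hn1
  have hnt : 0 < (n : ℝ) * t := mul_pos hnpos ht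
  rw [phiT_iter t ht.le n hz]
  have hb := phiT_bound ((n:ℝ) * t) hnt hz
  have hlt : 2 / ((n:ℝ) * t) < ε := by
    rw [div_lt_iff₀ hnt]
    have hNn : 2 / (ε * t) < (n : ℝ) := by
      refine lt_of_lt_of_le hN ?_
      exact_mod_cast le_trans (Nat.le_succ N) hn
    rw [div_lt_iff₀ (by positivity)] at hNn
    nlinarith
  linarith
end

section
/- Let φ : ℂ → ℂ be analytic on 𝔻 and map 𝔻 into 𝔻, let a ∈ ℂ, and suppose there are constants K ≥ 0 and 0 ≤ c < 1 such that |φ_n(z) − a| ≤ K·c^n for every z ∈ 𝔻 and every n ≥ 0. Let η : ℂ → ℂ be analytic on 𝔻 with |η(z) − η(a)| ≤ L·|z − a| for all z ∈ 𝔻 and some L ≥ 0, and set ψ = exp∘η, g(z) = Σ_{n=0}^{∞} (η(φ_n(z)) − η(a)) (the series converges for each z ∈ 𝔻), and h = exp∘g. Then h is analytic on 𝔻, there are constants 0 < m ≤ M with m ≤ |h(z)| ≤ M for all z ∈ 𝔻 (so h and 1/h are bounded on 𝔻), and h is an eigenfunction identity solution: ψ(z)·h(φ(z)) = ψ(a)·h(z)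 for every z ∈ 𝔻. -/
open Metric Complex

theorem stmt_11 (φ η ψ g h : ℂ → ℂ) (a : ℂ) (K c L : ℝ)
    (hφ : DifferentiableOn ℂ φ (ball (0:ℂ) 1))
    (hmaps : Set.MapsTo φ (ball (0:ℂ) 1) (ball (0:ℂ) 1))
    (hK : 0 ≤ K) (hc0 : 0 ≤ c) (hc1 : c < 1)
    (hbound : ∀ z ∈ ball (0:ℂ) 1, ∀ n : ℕ,
      ‖φ^[n] z - a‖ ≤ K * c ^ n)
    (hη : DifferentiableOn ℂ η (ball (0:ℂ) 1))
    (hL : 0 ≤ L)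
    (hlip : ∀ z ∈ ball (0:ℂ) 1, ‖η z - η a‖ ≤ L * ‖z - a‖)
    (hψ : ψ = fun z => Complex.exp (η z))
    (hg : ∀ z : ℂ, g z = ∑' n : ℕ, (η (φ^[n] z) - η a))
    (hh : h = fun z => Complex.exp (g z)) :
    (∀ z ∈ ball (0:ℂ) 1, Summable fun n : ℕ => η (φ^[n] z) - η a) ∧
    DifferentiableOn ℂ h (ball (0:ℂ) 1) ∧
    (∃ m M : ℝ, 0 < m ∧ m ≤ M ∧
      ∀ z ∈ ball (0:ℂ) 1, m ≤ ‖h z‖ ∧ ‖h z‖ ≤ M) ∧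
    ∀ z ∈ ball (0:ℂ) 1, ψ z * h (φ z) = ψ a * h z := by
  set u : ℕ → ℝ := fun n => L * K * c ^ n with hu_def
  have hu : Summable u := (summable_geometric_of_lt_one hc0 hc1).mul_left (L * K)
  have hmem : ∀ z ∈ ball (0:ℂ) 1, ∀ n : ℕ, φ^[n] z ∈ ball (0:ℂ) 1 :=
    fun z hz n => hmaps.iterate n hz
  have hterm : ∀ z ∈ ball (0:ℂ) 1, ∀ n : ℕ,
      ‖η (φ^[n] z) - η a‖ ≤ u n := by
    intro z hz n
    calc ‖η (φ^[n] z) - η a‖ ≤ L * ‖φ^[n] z - a‖ :=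
          hlip _ (hmem z hz n)
      _ ≤ L * (K * c ^ n) := mul_le_mul_of_nonneg_left (hbound z hz n) hL
      _ = u n := by simp [hu_def]; ring
  have hsum : ∀ z ∈ ball (0:ℂ) 1, Summable fun n : ℕ => η (φ^[n] z) - η a := by
    intro z hz
    refine hu.of_norm_bounded (fun n => ?_)
    simpa using hterm z hz n
  have hφn : ∀ n : ℕ, DifferentiableOn ℂ (φ^[n]) (ball (0:ℂ) 1) := by
    intro n
    induction n with
    | zero => simpa using differentiableOn_id
    | succ n ih =>
      rw [Function.iterate_succ']
      exact hφ.comp ih (hmaps.iterate n)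
  have hgd : DifferentiableOn ℂ g (ball (0:ℂ) 1) := by
    have hd : DifferentiableOn ℂ (fun z => ∑' n : ℕ, (η (φ^[n] z) - η a))
        (ball (0:ℂ) 1) := by
      refine differentiableOn_tsum_of_summable_norm hu (fun n => ?_) isOpen_ball
        (fun n w hw => ?_)
      · exact (hη.comp (hφn n) (hmaps.iterate n)).sub (differentiableOn_const _)
      · simpa using hterm w hw n
    exact hd.congr (fun z _ => hg z)
  have hhd : DifferentiableOn ℂ h (ball (0:ℂ) 1) := by
    rw [hh]
    exact hgd.cexp
  set B : ℝ := ∑' n, u n with hB_def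
  have hB0 : 0 ≤ B := tsum_nonneg (fun n => by positivity)
  have hgb : ∀ z ∈ ball (0:ℂ) 1, ‖g z‖ ≤ B := by
    intro z hz
    rw [hg z]
    exact tsum_of_norm_bounded hu.hasSum
      (fun n => by exact hterm z hz n)
  refine ⟨hsum, hhd, ⟨Real.exp (-B), Real.exp B, Real.exp_pos _,
      Real.exp_le_exp.2 (by linarith), fun z hz => ?_⟩, fun z hz => ?_⟩
  · have habs : ‖h z‖ = Real.exp ((g z).re) := by
      rw [hh]; simp [Complex.norm_exp]
    have h1 : |(g z).re| ≤ B := (Complex.abs_re_le_norm _).trans (hgb z hz)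
    rw [habs]
    constructor
    · exact Real.exp_le_exp.2 (by cases abs_le.1 h1; linarith)
    · exact Real.exp_le_exp.2 (by cases abs_le.1 h1; linarith)
  · have key : g z = (η z - η a) + g (φ z) := by
      rw [hg z, hg (φ z), Summable.tsum_eq_zero_add (hsum z hz)]
      simp [Function.iterate_succ_apply]
    rw [hψ, hh]
    simp only
    rw [← Complex.exp_add, ← Complex.exp_add, key]
    ring_nf
end

section
/- Let h ∈ ℓ²(ℕ, ℂ) and suppose that ⟨h, (I − S)^n h⟩ = 0 for every integer n ≥ 1, where S is the forward shift and I the identity. Then ⟨h, S^n h⟩ = ⟨h, h⟩ for every integer n ≥ 1. -/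
open scoped ComplexInnerProductSpace

theorem stmt_14 (h : lp (fun _ : ℕ => ℂ) 2)
    (S : lp (fun _ : ℕ => ℂ) 2 →L[ℂ] lp (fun _ : ℕ => ℂ) 2)
    (hS : ∀ f : lp (fun _ : ℕ => ℂ) 2,
      (S f : ∀ _ : ℕ, ℂ) 0 = 0 ∧ ∀ k : ℕ, (S f : ∀ _ : ℕ, ℂ) (k + 1) = (f : ∀ _ : ℕ, ℂ) k)
    (hinner : ∀ n : ℕ, 1 ≤ n → ⟪h, ((1 - S) ^ n) h⟫ = 0) :
    ∀ n : ℕ, 1 ≤ n → ⟪h, (S ^ n) h⟫ = ⟪h, h⟫ := by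
  intro n hn
  set T := 1 - S with hT
  have hSe : S = 1 + (-T) := by rw [hT]; abel
  have key : S ^ n = ∑ m ∈ Finset.range (n + 1),
      1 ^ m * (-T) ^ (n - m) * (n.choose m : _) := by
    rw [hSe, Commute.add_pow (Commute.one_left (-T))]
  rw [key]
  rw [ContinuousLinearMap.sum_apply, inner_sum, Finset.sum_range_succ]
  have hlast : ⟪h, (1 ^ n * (-T) ^ (n - n) * (n.choose n : _)) h⟫ = ⟪h, h⟫ := by
    simp
  rw [hlast]
  have hzero : ∀ m ∈ Finset.range n,
      ⟪h, (1 ^ m * (-T) ^ (n - m) * (n.choose m : _)) h⟫ = 0 := by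
    intro m hm
    rw [Finset.mem_range] at hm
    have h1 : 1 ≤ n - m := by omega
    have := hinner (n - m) h1
    have hneg : (-T) = (-1 : ℂ) • T := by simp
    have hc : ((n.choose m : lp (fun _ : ℕ => ℂ) 2 →L[ℂ] lp (fun _ : ℕ => ℂ) 2)) h
        = (n.choose m : ℂ) • h := by
      rw [ContinuousLinearMap.natCast_apply, Nat.cast_smul_eq_nsmul]
    simp only [one_pow, one_mul, ContinuousLinearMap.mul_apply, hc, map_smul,
      inner_smul_right, hneg, smul_pow, ContinuousLinearMap.smul_apply]
    rw [this]
    simp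
  rw [Finset.sum_eq_zero hzero, zero_add]
end

section
/- Let h ∈ ℓ²(ℕ, ℂ) and suppose that ⟨h, (I − S)^n h⟩ = 0 for every integer n ≥ 1, where S is the forward shift and I the identity. Then h = 0. (Under the identification of H² with ℓ², this says: an H² function orthogonal to (1−z)^n·h for all n ≥ 1 must vanish; this is the key step showing no weighted composition operator with hyperbolic non-automorphism symbol is hyponormal.) -/
open scoped ComplexInnerProductSpace

theorem stmt_15 (h : lp (fun _ : ℕ => ℂ) 2)
    (S : lp (fun _ : ℕ => ℂ) 2 →L[ℂ] lp (fun _ : ℕ => ℂ) 2)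
    (hS : ∀ f : lp (fun _ : ℕ => ℂ) 2,
      (S f : ∀ _ : ℕ, ℂ) 0 = 0 ∧ ∀ k : ℕ, (S f : ∀ _ : ℕ, ℂ) (k + 1) = (f : ∀ _ : ℕ, ℂ) k)
    (hinner : ∀ n : ℕ, 1 ≤ n → ⟪h, ((1 - S) ^ n) h⟫ = 0) :
    h = 0 := by
  -- Step 1: ⟪h, S h⟫ = ⟪h, h⟫ from the n = 1 hypothesis
  have h1 : ⟪h, (1 - S) h⟫ = 0 := by simpa using hinner 1 le_rfl
  have hSh : ⟪h, S h⟫ = ⟪h, h⟫ := by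
    have : ⟪h, h⟫ - ⟪h, S h⟫ = 0 := by
      simpa [inner_sub_right] using h1
    linear_combination -this
  -- Step 2: S is inner-product preserving on h: ⟪S h, S h⟫ = ⟪h, h⟫
  have hiso : ⟪S h, S h⟫ = ⟪h, h⟫ := by
    rw [lp.inner_eq_tsum, lp.inner_eq_tsum]
    have hsum : Summable fun i : ℕ =>
        ⟪(S h : ∀ _ : ℕ, ℂ) i, (S h : ∀ _ : ℕ, ℂ) i⟫ := lp.summable_inner (S h) (S h)
    rw [Summable.tsum_eq_zero_add hsum]
    simp [(hS h).1, (hS h).2]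
  -- Step 3: norms
  have hnorm : ‖S h‖ = ‖h‖ := by
    have h2 : ‖S h‖ ^ 2 = ‖h‖ ^ 2 := by
      rw [← inner_self_eq_norm_sq (𝕜 := ℂ), ← inner_self_eq_norm_sq (𝕜 := ℂ), hiso]
    nlinarith [norm_nonneg (S h), norm_nonneg h]
  -- Step 4: equality case in Cauchy–Schwarz
  have heq : (‖S h‖ : ℂ) • h = (‖h‖ : ℂ) • S h := by
    have := (inner_eq_norm_mul_iff (𝕜 := ℂ) (x := h) (y := S h)).mp
      (by rw [hSh, hnorm, inner_self_eq_norm_sq_to_K]; ring)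
    exact_mod_cast this
  by_cases hz : ‖h‖ = 0
  · exact norm_eq_zero.mp hz
  · exfalso
    rw [hnorm] at heq
    have hfix : h = S h := smul_right_injective _ (by exact_mod_cast hz) heq
    have hcoord : ∀ k : ℕ, (h : ∀ _ : ℕ, ℂ) k = 0 := by
      intro k
      induction k with
      | zero => rw [hfix]; exact (hS h).1
      | succ n ih => rw [hfix, (hS h).2 n]; exact ih
    apply hz
    rw [show h = 0 from lp.ext (funext hcoord)]
    simp
end
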